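/- arXiv:2504.03215 — 2 statements merged into one kernel-verified Lean document; each statement's English description precedes it below -/
import Mathlib

section
/- Let c > 0, V > 0. The function P(r₂) = (c/V)·exp(−4πc·r₂³/3) satisfies, for all r₂ > 0, the steady-state equation (1/r₂²)·d/dr₂ ( r₂²·P'(r₂) + r₂⁴·P(r₂)²/Q(r₂) ) = 0, where Q(r₂) = ∫_{r₂}^∞ P(s)s² ds. -/
open Real MeasureTheory Set

theorem hertz_density_is_steady_state (c V : ℝ) (hc : 0 < c) (hV : 0 < V)
    (P : ℝ → ℝ) (hP : ∀ r, P r = c / V * Real.exp (-(4 * π * c * r ^ 3 / 3)))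
    (Q : ℝ → ℝ) (hQ : ∀ r, Q r = ∫ s in Ioi r, P s * s ^ 2) :
    ∀ r2 : ℝ, 0 < r2 →
      (1 / r2 ^ 2) *
        deriv (fun r => r ^ 2 * deriv P r + r ^ 4 * (P r) ^ 2 / Q r) r2 = 0 := by
  have hπ : (0:ℝ) < π := Real.pi_pos
  set a : ℝ := 4 * π * c / 3 with ha
  have ha0 : 0 < a := by positivity
  have hPa : ∀ r, P r = c / V * Real.exp (-(a * r ^ 3)) := by
    intro r; rw [hP r, ha]; ring_nf
  -- antiderivative of s ↦ P s * s ^ 2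
  set F : ℝ → ℝ := fun r => -(c / V / (3 * a)) * Real.exp (-(a * r ^ 3)) with hF
  have hexp3 : ∀ x : ℝ, HasDerivAt (fun x : ℝ => -(a * x ^ 3)) (-(a * (3 * x ^ 2))) x := by
    intro x
    refine (((hasDerivAt_pow 3 x).const_mul a).neg).congr_deriv ?_
    norm_num
  have hderiv : ∀ x : ℝ, HasDerivAt F (P x * x ^ 2) x := by
    intro x
    have h2 := ((hexp3 x).exp).const_mul (-(c / V / (3 * a)))
    refine h2.congr_deriv ?_
    rw [hPa x]
    field_simp
  have hQval : ∀ r : ℝ, Q r = c / V / (3 * a) * Real.exp (-(a * r ^ 3)) := by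
    intro r
    rw [hQ r]
    have hcont : ContinuousWithinAt F (Ici r) r :=
      (hderiv r).continuousAt.continuousWithinAt
    have hnn : ∀ x ∈ Ioi r, 0 ≤ P x * x ^ 2 := by
      intro x _
      rw [hPa x]
      positivity
    have htend : Filter.Tendsto F Filter.atTop (nhds 0) := by
      have h1 : Filter.Tendsto (fun x : ℝ => -(a * x ^ 3)) Filter.atTop Filter.atBot := by
        exact Filter.tendsto_neg_atTop_atBot.comp ((Filter.tendsto_pow_atTop (by norm_num : (3:ℕ) ≠ 0)).const_mul_atTop ha0)
      have h2 : Filter.Tendsto (fun x : ℝ => Real.exp (-(a * x ^ 3))) Filter.atTop (nhds 0) :=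
        Real.tendsto_exp_atBot.comp h1
      simpa [hF, neg_mul] using h2.const_mul (-(c / V / (3 * a)))
    have := MeasureTheory.integral_Ioi_of_hasDerivAt_of_nonneg hcont
      (fun x _ => hderiv x) hnn htend
    rw [this, hF]
    ring
  have hQne : ∀ r : ℝ, Q r ≠ 0 := by
    intro r
    rw [hQval r]
    positivity
  have hPderiv : ∀ r : ℝ, deriv P r = c / V * Real.exp (-(a * r ^ 3)) * (-(a * (3 * r ^ 2))) := by
    intro r
    have hPfun : P = fun r => c / V * Real.exp (-(a * r ^ 3)) := funext hPa
    have : HasDerivAt P (c / V * Real.exp (-(a * r ^ 3)) * (-(a * (3 * r ^ 2)))) r := by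
      rw [hPfun]
      simpa [mul_comm, mul_assoc, mul_left_comm] using ((hexp3 r).exp).const_mul (c / V)
    exact this.deriv
  have hzero : (fun r => r ^ 2 * deriv P r + r ^ 4 * (P r) ^ 2 / Q r) = fun _ => (0:ℝ) := by
    funext r
    rw [hPderiv r, hPa r, hQval r]
    have hE : Real.exp (-(a * r ^ 3)) ≠ 0 := Real.exp_ne_zero _
    field_simp
    ring
  intro r2 _
  rw [hzero]
  simp
end

section
/- Let D₁, V, σ_max, c, Γ > 0, f(r₂) = σ_max·exp(−4πΓr₂³/3), and P₀(r₁, r₂) = (c/V)·exp(−4πcr₂³/3)·(1 − f(r₂)/r₁). Then the flux integral ∫₀^∞ D₁·(∂P₀/∂r₁)(f(r₂), r₂)·4πf(r₂)²·4πr₂² dr₂ equals 4πD₁σ_max c/(V(c+Γ)); in particular ∂P₀/∂r₁ evaluated at r₁ = f(r₂) equals (c/V)·exp(−4πcr₂³/3)/f(r₂). -/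
open Real MeasureTheory Set

lemma aux_exp_int (a : ℝ) (ha : 0 < a) :
    ∫ r in Ioi (0:ℝ), r ^ 2 * Real.exp (-(a * r ^ 3)) = 1 / (3 * a) := by
  have hderiv : ∀ x ∈ Ici (0:ℝ),
      HasDerivAt (fun r : ℝ => -Real.exp (-(a * r ^ 3)) / (3 * a))
        (x ^ 2 * Real.exp (-(a * x ^ 3))) x := by
    intro x _
    have h1 : HasDerivAt (fun r : ℝ => -(a * r ^ 3)) (-(a * (3 * x ^ 2))) x := by
      exact ((hasDerivAt_pow 3 x).const_mul a).neg.congr_deriv (by norm_num)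
    have h2 := (h1.exp.neg.div_const (3 * a))
    refine h2.congr_deriv ?_
    field_simp
  have hpos : ∀ x ∈ Ioi (0:ℝ), 0 ≤ x ^ 2 * Real.exp (-(a * x ^ 3)) := by
    intro x _
    positivity
  have htend : Filter.Tendsto (fun r : ℝ => -Real.exp (-(a * r ^ 3)) / (3 * a))
      Filter.atTop (nhds 0) := by
    have : Filter.Tendsto (fun r : ℝ => -(a * r ^ 3)) Filter.atTop Filter.atBot := by
      apply Filter.tendsto_neg_atBot_iff.2
      exact (Filter.tendsto_pow_atTop (by norm_num)).const_mul_atTop ha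
    have := (Real.tendsto_exp_atBot.comp this).neg.div_const (3 * a)
    simpa using this
  have := integral_Ioi_of_hasDerivAt_of_nonneg' hderiv hpos htend
  rw [this]
  field_simp
  simp

theorem leading_order_flux (D₁ V σmax c Γ : ℝ)
    (hD : 0 < D₁) (hV : 0 < V) (hσ : 0 < σmax) (hc : 0 < c) (hΓ : 0 < Γ)
    (f : ℝ → ℝ) (hf : ∀ r, f r = σmax * Real.exp (-(4 * π * Γ * r ^ 3 / 3)))
    (P0 : ℝ → ℝ → ℝ)
    (hP0 : ∀ r1 r2, P0 r1 r2 =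
      c / V * Real.exp (-(4 * π * c * r2 ^ 3 / 3)) * (1 - f r2 / r1)) :
    (∀ r2, 0 ≤ r2 →
      deriv (fun r1 => P0 r1 r2) (f r2) =
        (c / V) * Real.exp (-(4 * π * c * r2 ^ 3 / 3)) / f r2) ∧
    (∫ r2 in Ioi (0:ℝ),
        D₁ * deriv (fun r1 => P0 r1 r2) (f r2) * (4 * π * (f r2) ^ 2) * (4 * π * r2 ^ 2)) =
      4 * π * D₁ * σmax * c / (V * (c + Γ)) := by
  have hfpos : ∀ r, 0 < f r := by
    intro r; rw [hf r]; positivity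
  have hder : ∀ r2 : ℝ, deriv (fun r1 => P0 r1 r2) (f r2) =
      (c / V) * Real.exp (-(4 * π * c * r2 ^ 3 / 3)) / f r2 := by
    intro r2
    have hne : f r2 ≠ 0 := (hfpos r2).ne'
    set A := c / V * Real.exp (-(4 * π * c * r2 ^ 3 / 3)) with hA
    have h1 : HasDerivAt (fun r1 : ℝ => A * (1 - f r2 / r1))
        (A * (f r2 / (f r2) ^ 2)) (f r2) := by
      have hinv : HasDerivAt (fun r1 : ℝ => r1⁻¹) (-((f r2) ^ 2)⁻¹) (f r2) :=
        hasDerivAt_inv hne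
      have := ((hinv.const_mul (f r2)).const_sub 1).const_mul A
      refine this.congr_deriv ?_
      field_simp
    have h2 : HasDerivAt (fun r1 => P0 r1 r2) (A * (f r2 / (f r2) ^ 2)) (f r2) := by
      apply h1.congr_of_eventuallyEq
      filter_upwards with x
      rw [hP0]
    rw [h2.deriv]
    field_simp
  constructor
  · intro r2 _; exact hder r2
  · have hkey : (fun r2 => D₁ * deriv (fun r1 => P0 r1 r2) (f r2) *
        (4 * π * (f r2) ^ 2) * (4 * π * r2 ^ 2)) =
        fun r2 => (16 * π ^ 2 * D₁ * c * σmax / V) *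
          (r2 ^ 2 * Real.exp (-((4 * π * (c + Γ) / 3) * r2 ^ 3))) := by
      funext r2
      rw [hder r2, hf r2]
      have hne : Real.exp (-(4 * π * Γ * r2 ^ 3 / 3)) ≠ 0 := Real.exp_ne_zero _
      have hEs : Real.exp (-(4 * π * c * r2 ^ 3 / 3)) * Real.exp (-(4 * π * Γ * r2 ^ 3 / 3))
          = Real.exp (-((4 * π * (c + Γ) / 3) * r2 ^ 3)) := by
        rw [← Real.exp_add]; ring_nf
      calc D₁ * (c / V * Real.exp (-(4 * π * c * r2 ^ 3 / 3)) /
              (σmax * Real.exp (-(4 * π * Γ * r2 ^ 3 / 3)))) *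
            (4 * π * (σmax * Real.exp (-(4 * π * Γ * r2 ^ 3 / 3))) ^ 2) * (4 * π * r2 ^ 2)
          = 16 * π ^ 2 * D₁ * c * σmax / V *
            (r2 ^ 2 * (Real.exp (-(4 * π * c * r2 ^ 3 / 3)) *
              Real.exp (-(4 * π * Γ * r2 ^ 3 / 3)))) := by
            field_simp; ring
        _ = 16 * π ^ 2 * D₁ * c * σmax / V *
            (r2 ^ 2 * Real.exp (-((4 * π * (c + Γ) / 3) * r2 ^ 3))) := by rw [hEs]
    rw [hkey, MeasureTheory.integral_const_mul,
      aux_exp_int (4 * π * (c + Γ) / 3) (by positivity)]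
    have hne : (c + Γ) ≠ 0 := by positivity
    have hπ : (π : ℝ) ≠ 0 := Real.pi_ne_zero
    field_simp
    ring
end
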